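/- arXiv:1906.06494 — 2 statements merged into one kernel-verified Lean document; each statement's English description precedes it below -/
import Mathlib

section
/- For the dihedral group I_2(2p) acting on ℝ², the polynomials p_1(X) = X_1² + X_2² and p_2(X) = ∑_{j=1}^{p} (X_1 cos 2jθ + X_2 sin 2jθ)^p (with θ = π/(2p)) satisfy: the coefficient of X_1^p in p_2 is ∑_{j=1}^{p} (cos 2jθ)^p, and this coefficient is nonzero. -/
open scoped BigOperators
open MvPolynomial

noncomputable section

lemma coeff_lin_pow (a b : ℝ) (p : ℕ) :
    MvPolynomial.coeff (Finsupp.single (0 : Fin 2) p)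
      ((C a * X (0:Fin 2) + C b * X 1) ^ p) = a ^ p := by
  rw [add_pow, MvPolynomial.coeff_sum]
  have key : ∀ k ∈ Finset.range (p+1),
      MvPolynomial.coeff (Finsupp.single (0 : Fin 2) p)
        ((C a * X (0:Fin 2))^k * (C b * X 1)^(p-k) * (p.choose k : MvPolynomial (Fin 2) ℝ))
      = if k = p then a ^ p else 0 := by
    intro k hk
    have hkle : k ≤ p := Nat.lt_succ_iff.mp (Finset.mem_range.mp hk)
    have heq : (C a * X (0:Fin 2))^k * (C b * X 1)^(p-k) * (p.choose k : MvPolynomial (Fin 2) ℝ)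
        = monomial (Finsupp.single (0:Fin 2) k + Finsupp.single (1:Fin 2) (p-k))
            (a^k * b^(p-k) * (p.choose k : ℝ)) := by
      simp only [mul_pow, ← C_pow, X_pow_eq_monomial, C_mul_monomial, ← C_eq_coe_nat,
        monomial_mul, mul_one]
      rw [mul_comm (monomial _ _) (C _), C_mul_monomial]
      congr 1; ring
    rw [heq, coeff_monomial]
    rcases eq_or_ne k p with rfl | hne
    · simp
    · have hcond : Finsupp.single (0:Fin 2) k + Finsupp.single (1:Fin 2) (p-k)
          ≠ Finsupp.single (0:Fin 2) p := by
        intro h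
        have := DFunLike.congr_fun h (1 : Fin 2)
        simp [Finsupp.single_apply] at this
        exact hne (Nat.le_antisymm hkle (Nat.le_of_sub_eq_zero this))
      rw [if_neg hcond, if_neg hne]
  rw [Finset.sum_congr rfl key]
  simp

lemma sum_cos_pow_ne (p : ℕ) (hp : 1 ≤ p) :
    ∑ j ∈ Finset.Icc 1 p, Real.cos ((j : ℝ) * Real.pi / p) ^ p ≠ 0 := by
  have hp0 : (p : ℝ) ≠ 0 := Nat.cast_ne_zero.mpr (by omega)
  have hlast : Real.cos ((p : ℝ) * Real.pi / p) ^ p = (-1 : ℝ) ^ p := by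
    rw [show (p:ℝ)*Real.pi/p = Real.pi by field_simp, Real.cos_pi]
  rcases Nat.even_or_odd p with he | ho
  · -- even case: sum is positive
    have pos : 0 < ∑ j ∈ Finset.Icc 1 p, Real.cos ((j : ℝ) * Real.pi / p) ^ p := by
      apply Finset.sum_pos'
      · intro i _; exact he.pow_nonneg _
      · refine ⟨p, Finset.mem_Icc.mpr ⟨hp, le_refl p⟩, ?_⟩
        rw [hlast, he.neg_one_pow]; norm_num
    exact ne_of_gt pos
  · -- odd case: sum = -1
    have hsplit : Finset.Icc 1 p = Finset.Icc 1 ((p - 1) + 1) := by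
      congr 1; omega
    have hzero : ∑ j ∈ Finset.Icc 1 (p - 1), Real.cos ((j : ℝ) * Real.pi / p) ^ p = 0 := by
      apply Finset.sum_involution (fun j _ => p - j)
      · intro j hj
        simp only [Finset.mem_Icc] at hj
        have hcast : ((p - j : ℕ) : ℝ) = (p : ℝ) - j := by
          push_cast [Nat.cast_sub (by omega : j ≤ p)]; ring
        have harg : ((p - j : ℕ) : ℝ) * Real.pi / p = Real.pi - (j : ℝ) * Real.pi / p := by
          rw [hcast]; field_simp
        rw [harg, Real.cos_pi_sub, ho.neg_pow]
        ring
      · intro j hj _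
        simp only [Finset.mem_Icc] at hj
        intro h
        have : 2 * j = p := by omega
        exact (Nat.not_even_iff_odd.mpr ho) ⟨j, by omega⟩
      · intro j hj
        simp only [Finset.mem_Icc] at hj ⊢
        omega
      · intro j hj
        simp only [Finset.mem_Icc] at hj
        omega
    rw [hsplit, Finset.sum_Icc_succ_top (by omega : 1 ≤ (p-1)+1)]
    have : ((p - 1 : ℕ) + 1 : ℕ) = p := by omega
    rw [this, hzero, zero_add, hlast, ho.neg_one_pow]
    norm_num

/-- for the dihedral group `I₂(2p)` on `ℝ²` with `θ = π/(2p)`, in the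
invariant polynomial `p₂(X) = ∑_{j=1}^p (X₁ cos 2jθ + X₂ sin 2jθ)^p` the coefficient of
`X₁^p` is `∑_{j=1}^p (cos 2jθ)^p`, and this coefficient is nonzero. -/
theorem statement3 (p : ℕ) (hp : 1 ≤ p) (θ : ℝ) (hθ : θ = Real.pi / (2 * p)) :
    MvPolynomial.coeff (Finsupp.single (0 : Fin 2) p)
      (∑ j ∈ Finset.Icc 1 p,
        (MvPolynomial.C (Real.cos (2 * (j : ℝ) * θ)) * MvPolynomial.X (0 : Fin 2)
          + MvPolynomial.C (Real.sin (2 * (j : ℝ) * θ)) * MvPolynomial.X 1) ^ p)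
      = ∑ j ∈ Finset.Icc 1 p, Real.cos (2 * (j : ℝ) * θ) ^ p
    ∧ ∑ j ∈ Finset.Icc 1 p, Real.cos (2 * (j : ℝ) * θ) ^ p ≠ 0 := by
  have hp0 : (p : ℝ) ≠ 0 := Nat.cast_ne_zero.mpr (by omega)
  have harg : ∀ j : ℕ, 2 * (j : ℝ) * θ = (j : ℝ) * Real.pi / p := by
    intro j; rw [hθ]; field_simp
  constructor
  · rw [MvPolynomial.coeff_sum]
    exact Finset.sum_congr rfl fun j _ => coeff_lin_pow _ _ _
  · have hsum : ∑ j ∈ Finset.Icc 1 p, Real.cos (2 * (j : ℝ) * θ) ^ p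
        = ∑ j ∈ Finset.Icc 1 p, Real.cos ((j : ℝ) * Real.pi / p) ^ p :=
      Finset.sum_congr rfl fun j _ => by rw [harg]
    rw [hsum]
    exact sum_cos_pow_ne p hp
end
end

section
/- If K ⊂ ℝ^n is a Whitney 1-regular compact set, then on the space E^r(K) of Whitney fields of class C^r on K, the seminorm ‖A‖^r_K (including the Whitney difference quotients) and the sup-seminorm |A|^r_K = sup_{x ∈ K, |k| ≤ r} |a_k(x)| are equivalent. -/
open scoped BigOperators
open MvPolynomial

noncomputable section

/-- The length `|k| = ∑ kᵢ` of a multi-index. -/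
def deg {n : ℕ} (k : Fin n → ℕ) : ℕ := ∑ i, k i

/-- The finset of multi-indices of length at most `m`. -/
def MIdx (n m : ℕ) : Finset (Fin n → ℕ) :=
  (Fintype.piFinset fun _ => Finset.range (m + 1)).filter fun k => deg k ≤ m

/-- The factorial `k! = ∏ kᵢ!` of a multi-index. -/
def mfact {n : ℕ} (k : Fin n → ℕ) : ℕ := ∏ i, Nat.factorial (k i)

/-- The power `y^k = ∏ yᵢ^kᵢ`. -/
def mpow {n : ℕ} (y : Fin n → ℝ) (k : Fin n → ℕ) : ℝ := ∏ i, y i ^ k i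

/-- A jet: a family of (coefficient) functions indexed by multi-indices. -/
abbrev Jet (n : ℕ) := (Fin n → ℕ) → (Fin n → ℝ) → ℝ

/-- The polynomial `(D^q A)_x` of a jet `a` of order `m`, evaluated at `x'`. -/
def Dq {n : ℕ} (a : Jet n) (m : ℕ) (q : Fin n → ℕ) (x x' : Fin n → ℝ) : ℝ :=
  ∑ k ∈ MIdx n m,
    if ∀ i, q i ≤ k i then a k x * mpow (x' - x) (k - q) / (mfact (k - q) : ℝ) else 0

/-- The Whitney remainder `(R_x A)^q (x') = (D^q A)_{x'}(x') - (D^q A)_x(x')`. -/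
def WRem {n : ℕ} (a : Jet n) (m : ℕ) (q : Fin n → ℕ) (x x' : Fin n → ℝ) : ℝ :=
  Dq a m q x' x' - Dq a m q x x'

/-- All coefficients of order ≤ m of the jet are continuous on `E`. -/
def JetContinuousOn {n : ℕ} (a : Jet n) (m : ℕ) (E : Set (Fin n → ℝ)) : Prop :=
  ∀ k, deg k ≤ m → ContinuousOn (a k) E

/-- The Whitney conditions `(W_q^r)` on a set `K` for a jet of order `m`:
`(R_x A)^q (x') = o(|x' - x|^{r - |q|})` uniformly on `K`, for all `|q| ≤ r`. -/
def WhitneyCondOn {n : ℕ} (a : Jet n) (r m : ℕ) (K : Set (Fin n → ℝ)) : Prop :=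
  ∀ q, deg q ≤ r → ∀ ε > (0 : ℝ), ∃ δ > (0 : ℝ), ∀ x ∈ K, ∀ x' ∈ K,
    ‖x' - x‖ ≤ δ → |WRem a m q x x'| ≤ ε * ‖x' - x‖ ^ (r - deg q)

/-- `a` is an `r`-regular jet of order `m` on `E`: continuous coefficients and the
Whitney conditions `(W_q^r)` hold on every compact subset of `E`. -/
def RegularJetOn {n : ℕ} (a : Jet n) (r m : ℕ) (E : Set (Fin n → ℝ)) : Prop :=
  JetContinuousOn a m E ∧ ∀ K ⊆ E, IsCompact K → WhitneyCondOn a r m K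

/-- Evaluation of a polynomial map `ℝⁿ → ℝⁿ` given by the polynomials `p i`. -/
def PmF {n : ℕ} (p : Fin n → MvPolynomial (Fin n) ℝ) (x : Fin n → ℝ) : Fin n → ℝ :=
  fun i => MvPolynomial.eval x (p i)

/-- A compact set is Whitney 1-regular if any two of its points can be joined inside it
by a rectifiable arc of length at most a constant times their Euclidean distance. -/
def WhitneyOneRegular {n : ℕ} (K : Set (Fin n → ℝ)) : Prop :=
  ∃ c : ℝ, 0 < c ∧ ∀ x ∈ K, ∀ y ∈ K, ∃ γ : ℝ → (Fin n → ℝ),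
    ContinuousOn γ (Set.Icc 0 1) ∧ γ 0 = x ∧ γ 1 = y ∧
    Set.MapsTo γ (Set.Icc 0 1) K ∧
    eVariationOn γ (Set.Icc 0 1) ≤ ENNReal.ofReal (c * ‖y - x‖)

variable {n : ℕ}

lemma le_deg (k : Fin n → ℕ) (i : Fin n) : k i ≤ deg k :=
  Finset.single_le_sum (fun _ _ => Nat.zero_le _) (Finset.mem_univ i)

lemma mem_MIdx {k : Fin n → ℕ} {m : ℕ} : k ∈ MIdx n m ↔ deg k ≤ m := by
  simp only [MIdx, Finset.mem_filter, Fintype.mem_piFinset, Finset.mem_range]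
  constructor
  · exact fun h => h.2
  · exact fun h => ⟨fun i => Nat.lt_succ_of_le ((le_deg k i).trans h), h⟩

lemma deg_add (q j : Fin n → ℕ) : deg (q + j) = deg q + deg j := by
  simp [deg, Finset.sum_add_distrib]

lemma deg_sub_add {q k : Fin n → ℕ} (h : ∀ i, q i ≤ k i) : deg q + deg (k - q) = deg k := by
  rw [deg, deg, deg, ← Finset.sum_add_distrib]
  exact Finset.sum_congr rfl fun i _ => by have := h i; simp [Pi.sub_apply]; omega

lemma one_le_mfact (k : Fin n → ℕ) : (1:ℝ) ≤ (mfact k : ℝ) := by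
  have : 1 ≤ mfact k := Finset.one_le_prod' fun i _ => Nat.one_le_iff_ne_zero.2 (Nat.factorial_ne_zero _)
  exact_mod_cast this

lemma mfact_pos (k : Fin n → ℕ) : (0:ℝ) < (mfact k : ℝ) := lt_of_lt_of_le one_pos (one_le_mfact k)

lemma mpow_zero (y : Fin n → ℝ) : mpow y 0 = 1 := by simp [mpow]

lemma mfact_zero : (mfact (0 : Fin n → ℕ) : ℝ) = 1 := by simp [mfact]

lemma deg_eq_zero {k : Fin n → ℕ} : deg k = 0 ↔ k = 0 := by
  simp only [deg, Finset.sum_eq_zero_iff, Finset.mem_univ, true_implies]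
  exact ⟨fun h => funext fun i => h i, fun h i => by rw [h]; rfl⟩

lemma mpow_zero_left {j : Fin n → ℕ} (hj : j ≠ 0) : mpow (0 : Fin n → ℝ) j = 0 := by
  obtain ⟨i, hi⟩ : ∃ i, j i ≠ 0 := by
    by_contra h; push_neg at h; exact hj (funext fun i => h i)
  exact Finset.prod_eq_zero (Finset.mem_univ i) (by simp [zero_pow hi])

lemma abs_mpow_le (y : Fin n → ℝ) (j : Fin n → ℕ) {R : ℝ} (hR : 0 ≤ R)
    (h : ∀ i, |y i| ≤ R) : |mpow y j| ≤ R ^ deg j := by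
  rw [mpow, Finset.abs_prod, deg, ← Finset.prod_pow_eq_pow_sum]
  exact Finset.prod_le_prod (fun i _ => abs_nonneg _)
    (fun i _ => by rw [abs_pow]; exact pow_le_pow_left₀ (abs_nonneg _) (h i) _)

lemma norm_coord_le (v : Fin n → ℝ) (i : Fin n) : |v i| ≤ ‖v‖ := by
  simpa using norm_le_pi_norm v i

lemma abs_pow_sub_pow (u v : ℝ) (p : ℕ) {R : ℝ} (hu : |u| ≤ R) (hv : |v| ≤ R) :
    |u ^ p - v ^ p| ≤ p * R ^ (p - 1) * |u - v| := by
  have hR : 0 ≤ R := (abs_nonneg u).trans hu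
  rcases Nat.eq_zero_or_pos p with hp | hp
  · simp [hp]
  have := geom_sum₂_mul u v p
  rw [← this, abs_mul]
  have : |∑ i ∈ Finset.range p, u ^ i * v ^ (p - 1 - i)| ≤ p * R ^ (p - 1) := by
    calc |∑ i ∈ Finset.range p, u ^ i * v ^ (p - 1 - i)|
        ≤ ∑ i ∈ Finset.range p, |u ^ i * v ^ (p - 1 - i)| := Finset.abs_sum_le_sum_abs _ _
      _ ≤ ∑ i ∈ Finset.range p, R ^ (p - 1) := by
          apply Finset.sum_le_sum
          intro i hi
          rw [abs_mul, abs_pow, abs_pow]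
          have hi' : i ≤ p - 1 := by have := Finset.mem_range.1 hi; omega
          calc |u| ^ i * |v| ^ (p - 1 - i) ≤ R ^ i * R ^ (p - 1 - i) := by
                exact mul_le_mul (pow_le_pow_left₀ (abs_nonneg _) hu _)
                  (pow_le_pow_left₀ (abs_nonneg _) hv _) (pow_nonneg (abs_nonneg _) _)
                  (pow_nonneg hR _)
            _ = R ^ (p - 1) := by rw [← pow_add]; congr 1; omega
      _ = p * R ^ (p - 1) := by rw [Finset.sum_const, Finset.card_range, nsmul_eq_mul]
  exact mul_le_mul_of_nonneg_right this (abs_nonneg _)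


lemma prod_lip (u v : Fin n → ℝ) (j : Fin n → ℕ) {R D : ℝ} (hD : 0 ≤ D)
    (hu : ∀ i, |u i| ≤ R) (hv : ∀ i, |v i| ≤ R) (huv : ∀ i, |u i - v i| ≤ D) :
    ∀ s : Finset (Fin n),
      |∏ i ∈ s, u i ^ j i - ∏ i ∈ s, v i ^ j i| ≤
        (∑ i ∈ s, j i) * R ^ ((∑ i ∈ s, j i) - 1) * D := by
  intro s
  induction s using Finset.induction_on with
  | empty => simp
  | @insert a s ha ih =>
    have hR : 0 ≤ R := (abs_nonneg _).trans (hu a)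
    rw [Finset.prod_insert ha, Finset.prod_insert ha, Finset.sum_insert ha]
    set S := ∑ i ∈ s, j i with hS
    have key : u a ^ j a * ∏ i ∈ s, u i ^ j i - v a ^ j a * ∏ i ∈ s, v i ^ j i
        = u a ^ j a * (∏ i ∈ s, u i ^ j i - ∏ i ∈ s, v i ^ j i)
          + (u a ^ j a - v a ^ j a) * ∏ i ∈ s, v i ^ j i := by ring
    rw [key]
    have h1 : |u a ^ j a * (∏ i ∈ s, u i ^ j i - ∏ i ∈ s, v i ^ j i)|
        ≤ R ^ j a * (S * R ^ (S - 1) * D) := by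
      rw [abs_mul]
      exact mul_le_mul (by rw [abs_pow]; exact pow_le_pow_left₀ (abs_nonneg _) (hu a) _)
        ih (abs_nonneg _) (pow_nonneg hR _)
    have h2 : |(u a ^ j a - v a ^ j a) * ∏ i ∈ s, v i ^ j i|
        ≤ (j a * R ^ (j a - 1) * D) * R ^ S := by
      rw [abs_mul]
      apply mul_le_mul
      · exact (abs_pow_sub_pow _ _ _ (hu a) (hv a)).trans
          (mul_le_mul_of_nonneg_left (huv a)
            (mul_nonneg (Nat.cast_nonneg _) (pow_nonneg hR _)))
      · rw [Finset.abs_prod, ← Finset.prod_pow_eq_pow_sum]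
        exact Finset.prod_le_prod (fun i _ => abs_nonneg _)
          (fun i _ => by rw [abs_pow]; exact pow_le_pow_left₀ (abs_nonneg _) (hv i) _)
      · exact abs_nonneg _
      · positivity
    calc |_| ≤ _ := abs_add_le _ _
      _ ≤ R ^ j a * (S * R ^ (S - 1) * D) + (j a * R ^ (j a - 1) * D) * R ^ S :=
          add_le_add h1 h2
      _ ≤ ↑(j a + S) * R ^ (j a + S - 1) * D := by
          push_cast
          rcases Nat.eq_zero_or_pos S with h0 | h0
          · rw [h0]
            rcases Nat.eq_zero_or_pos (j a) with h1 | h1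
            · simp [h1]
            · have : j a + 0 - 1 = j a - 1 := by omega
              rw [this]
              push_cast
              nlinarith [pow_nonneg hR (j a - 1), pow_nonneg hR (j a),
                mul_nonneg (mul_nonneg (Nat.cast_nonneg (j a) : (0:ℝ) ≤ j a)
                  (pow_nonneg hR (j a - 1))) hD]
          · have e1 : R ^ j a * R ^ (S - 1) = R ^ (j a + S - 1) := by
              rw [← pow_add]; congr 1; omega
            rcases Nat.eq_zero_or_pos (j a) with h1 | h1
            · have : (0:ℕ) + S - 1 = S - 1 := by omega
              simp only [h1, Nat.cast_zero, zero_mul, zero_add, pow_zero, one_mul,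
                zero_mul, add_zero, Nat.zero_add, this]
              exact le_refl _
            · have e2 : R ^ (j a - 1) * R ^ S = R ^ (j a + S - 1) := by
                rw [← pow_add]; congr 1; omega
              have heq : R ^ j a * (↑S * R ^ (S - 1) * D) + ↑(j a) * R ^ (j a - 1) * D * R ^ S
                  = (↑(j a) + ↑S) * R ^ (j a + S - 1) * D := by
                linear_combination (↑S * D) * e1 + (↑(j a) * D) * e2
              exact le_of_eq heq

lemma mfact_ne (k : Fin n → ℕ) : (mfact k : ℝ) ≠ 0 := by
  have : mfact k ≠ 0 := Finset.prod_ne_zero_iff.2 fun i _ => Nat.factorial_ne_zero _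
  exact_mod_cast this

lemma multi_binom (u v : Fin n → ℝ) (k : Fin n → ℕ) :
    mpow (u + v) k / mfact k =
      ∑ j ∈ Fintype.piFinset (fun i => Finset.range (k i + 1)),
        mpow u (k - j) / mfact (k - j) * (mpow v j / mfact j) := by
  have expand : mpow (u + v) k
      = ∑ j ∈ Fintype.piFinset (fun i => Finset.range (k i + 1)),
          mpow u (k - j) * mpow v j * ((mfact k : ℝ) / (mfact (k - j) * mfact j)) := by
    have h1 : mpow (u + v) k = ∏ i, ∑ t ∈ Finset.range (k i + 1),
        v i ^ t * u i ^ (k i - t) * ((k i).choose t : ℝ) := by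
      rw [mpow]
      refine Finset.prod_congr rfl fun i _ => ?_
      have := add_pow (v i) (u i) (k i)
      rw [Pi.add_apply, add_comm (u i) (v i), this]
    rw [h1, Finset.prod_univ_sum]
    refine Finset.sum_congr rfl fun j hj => ?_
    have hjk : ∀ i, j i ≤ k i := by
      intro i
      have := (Fintype.mem_piFinset.1 hj) i
      simpa [Nat.lt_succ_iff] using this
    rw [Finset.prod_mul_distrib, Finset.prod_mul_distrib]
    have hc : (∏ i, ((k i).choose (j i) : ℝ))
        = (mfact k : ℝ) / ((mfact (k - j) : ℝ) * (mfact j : ℝ)) := by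
      have : ∀ i, ((k i).choose (j i) : ℝ)
          = (k i).factorial / ((j i).factorial * ((k i) - (j i)).factorial) := by
        intro i; exact_mod_cast Nat.cast_choose ℝ (hjk i)
      rw [Finset.prod_congr rfl fun i _ => this i]
      rw [Finset.prod_div_distrib, Finset.prod_mul_distrib]
      have e1 : (mfact k : ℝ) = ∏ i, ((k i).factorial : ℝ) := by
        simp [mfact]
      have e2 : (mfact j : ℝ) = ∏ i, ((j i).factorial : ℝ) := by simp [mfact]
      have e3 : (mfact (k - j) : ℝ) = ∏ i, (((k i) - (j i)).factorial : ℝ) := by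
        simp [mfact]
      rw [← e1, ← e2, ← e3]
      ring
    rw [hc, mpow, mpow]
    simp only [Pi.sub_apply]
    ring
  rw [expand, Finset.sum_div]
  refine Finset.sum_congr rfl fun j hj => ?_
  field_simp [mfact_ne]
  rw [mul_assoc (mfact k : ℝ), mul_comm (mfact k : ℝ), mul_div_mul_right _ _ (mfact_ne k)]

lemma Dq_filter (a : Jet n) (m : ℕ) (q : Fin n → ℕ) (x y : Fin n → ℝ) :
    Dq a m q x y = ∑ k ∈ (MIdx n m).filter (fun k => ∀ i, q i ≤ k i),
      a k x * mpow (y - x) (k - q) / (mfact (k - q) : ℝ) := by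
  rw [Dq, Finset.sum_filter]

lemma Dq_expand (a : Jet n) (m : ℕ) (q : Fin n → ℕ) (hq : deg q ≤ m) (x z y : Fin n → ℝ) :
    Dq a m q x y
      = ∑ j ∈ MIdx n (m - deg q), Dq a m (q + j) x z * (mpow (y - z) j / mfact j) := by
  -- rewrite RHS as a sigma sum
  have rhs : ∑ j ∈ MIdx n (m - deg q), Dq a m (q + j) x z * (mpow (y - z) j / mfact j)
      = ∑ p ∈ (MIdx n (m - deg q)).sigma
          (fun j => (MIdx n m).filter (fun k => ∀ i, (q + j) i ≤ k i)),
          a p.2 x * mpow (z - x) (p.2 - q - p.1) / (mfact (p.2 - q - p.1) : ℝ)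
            * (mpow (y - z) p.1 / mfact p.1) := by
    rw [Finset.sum_sigma]
    refine Finset.sum_congr rfl fun j hj => ?_
    rw [Dq_filter, Finset.sum_mul]
    refine Finset.sum_congr rfl fun k hk => ?_
    have : k - (q + j) = k - q - j := by
      funext i; simp [Pi.sub_apply, Pi.add_apply]; omega
    rw [this]
  rw [rhs]
  -- bijection to sigma over k, then inner binomial
  have lhs : Dq a m q x y
      = ∑ p ∈ ((MIdx n m).filter (fun k => ∀ i, q i ≤ k i)).sigma
          (fun k => Fintype.piFinset (fun i => Finset.range ((k - q) i + 1))),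
          a p.1 x * mpow (z - x) (p.1 - q - p.2) / (mfact (p.1 - q - p.2) : ℝ)
            * (mpow (y - z) p.2 / mfact p.2) := by
    rw [Dq_filter, Finset.sum_sigma]
    refine Finset.sum_congr rfl fun k hk => ?_
    have hk' : ∀ i, q i ≤ k i := (Finset.mem_filter.1 hk).2
    have key : ∑ j ∈ Fintype.piFinset (fun i => Finset.range ((k - q) i + 1)),
        mpow (z - x) ((k - q) - j) / mfact ((k - q) - j) * (mpow (y - z) j / mfact j)
        = mpow (y - x) (k - q) / mfact (k - q) := by
      rw [← multi_binom (z - x) (y - z) (k - q)]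
      congr 2
      abel
    rw [eq_comm]
    calc ∑ j ∈ Fintype.piFinset (fun i => Finset.range ((k - q) i + 1)),
          a k x * mpow (z - x) (k - q - j) / (mfact (k - q - j) : ℝ)
            * (mpow (y - z) j / mfact j)
        = a k x * ∑ j ∈ Fintype.piFinset (fun i => Finset.range ((k - q) i + 1)),
            mpow (z - x) ((k - q) - j) / (mfact ((k - q) - j) : ℝ)
              * (mpow (y - z) j / mfact j) := by
          rw [Finset.mul_sum]
          exact Finset.sum_congr rfl fun j _ => by ring
      _ = a k x * (mpow (y - x) (k - q) / mfact (k - q)) := by rw [key]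
      _ = a k x * mpow (y - x) (k - q) / (mfact (k - q) : ℝ) := by ring
  have bij : ∑ p ∈ ((MIdx n m).filter (fun k => ∀ i, q i ≤ k i)).sigma
          (fun k => Fintype.piFinset (fun i => Finset.range ((k - q) i + 1))),
          a p.1 x * mpow (z - x) (p.1 - q - p.2) / (mfact (p.1 - q - p.2) : ℝ)
            * (mpow (y - z) p.2 / mfact p.2)
      = ∑ p ∈ (MIdx n (m - deg q)).sigma
          (fun j => (MIdx n m).filter (fun k => ∀ i, (q + j) i ≤ k i)),
          a p.2 x * mpow (z - x) (p.2 - q - p.1) / (mfact (p.2 - q - p.1) : ℝ)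
            * (mpow (y - z) p.1 / mfact p.1) := by
    refine Finset.sum_nbij' (fun p => ⟨p.2, p.1⟩) (fun p => ⟨p.2, p.1⟩) ?_ ?_ ?_ ?_ ?_
    · rintro ⟨k, j⟩ hp
      simp only [Finset.mem_sigma, Finset.mem_filter, Fintype.mem_piFinset,
        Finset.mem_range, mem_MIdx, Pi.sub_apply, Pi.add_apply] at hp ⊢
      obtain ⟨⟨hk1, hk2⟩, hj⟩ := hp
      have hjk : ∀ i, j i ≤ k i - q i := fun i => by have := hj i; omega
      refine ⟨?_, hk1, fun i => by have := hjk i; have := hk2 i; omega⟩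
      have h1 : deg j ≤ deg (k - q) :=
        Finset.sum_le_sum fun i _ => by simp only [Pi.sub_apply]; exact hjk i
      have h2 : deg q + deg (k - q) = deg k := deg_sub_add hk2
      omega
    · rintro ⟨j, k⟩ hp
      simp only [Finset.mem_sigma, Finset.mem_filter, Fintype.mem_piFinset,
        Finset.mem_range, mem_MIdx, Pi.sub_apply, Pi.add_apply] at hp ⊢
      obtain ⟨hj, hk1, hk2⟩ := hp
      exact ⟨⟨hk1, fun i => by have := hk2 i; omega⟩, fun i => by have := hk2 i; omega⟩
    · rintro ⟨k, j⟩ _; rfl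
    · rintro ⟨j, k⟩ _; rfl
    · rintro ⟨k, j⟩ _; rfl
  rw [lhs, bij, ← rhs]

lemma Dq_top (a : Jet n) {m : ℕ} {q : Fin n → ℕ} (hq : deg q = m) (x y : Fin n → ℝ) :
    Dq a m q x y = a q x := by
  rw [Dq_filter]
  have hset : (MIdx n m).filter (fun k => ∀ i, q i ≤ k i) = {q} := by
    ext k
    simp only [Finset.mem_filter, Finset.mem_singleton, mem_MIdx]
    constructor
    · rintro ⟨hk, hq'⟩
      by_contra hne
      have hlt : ∃ i, q i < k i := by
        by_contra h; push_neg at h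
        exact hne (funext fun i => le_antisymm (h i) (hq' i))
      obtain ⟨i, hi⟩ := hlt
      have : deg q < deg k :=
        Finset.sum_lt_sum (fun i _ => hq' i) ⟨i, Finset.mem_univ i, hi⟩
      omega
    · rintro rfl
      exact ⟨le_of_eq hq, fun i => le_refl _⟩
  rw [hset, Finset.sum_singleton]
  have : q - q = (0 : Fin n → ℕ) := by funext i; simp
  rw [this, mpow_zero, mfact_zero]
  ring

lemma WRem_top (a : Jet n) {m : ℕ} {q : Fin n → ℕ} (hq : deg q = m) (w z : Fin n → ℝ) :
    WRem a m q w z = a q z - a q w := by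
  rw [WRem, Dq_top a hq, Dq_top a hq]

lemma WRem_self (a : Jet n) (m : ℕ) (q : Fin n → ℕ) (z : Fin n → ℝ) :
    WRem a m q z z = 0 := sub_self _

lemma WRem_step (a : Jet n) (m : ℕ) (q : Fin n → ℕ) (hq : deg q ≤ m) (w z y : Fin n → ℝ) :
    Dq a m q z y - Dq a m q w y
      = ∑ j ∈ MIdx n (m - deg q), WRem a m (q + j) w z * (mpow (y - z) j / mfact j) := by
  rw [Dq_expand a m q hq w z y, Dq_expand a m q hq z z y, ← Finset.sum_sub_distrib]
  exact Finset.sum_congr rfl fun j _ => by rw [WRem]; ring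

lemma WRem_telescope (a : Jet n) (m : ℕ) (q : Fin n → ℕ) (hq : deg q ≤ m)
    (p : ℕ → (Fin n → ℝ)) (N : ℕ) :
    WRem a m q (p 0) (p N)
      = ∑ i ∈ Finset.range N, ∑ j ∈ MIdx n (m - deg q),
          WRem a m (q + j) (p i) (p (i + 1)) * (mpow (p N - p (i + 1)) j / mfact j) := by
  have := Finset.sum_range_sub (fun i => Dq a m q (p i) (p N)) N
  rw [WRem, ← this]
  exact Finset.sum_congr rfl fun i _ => WRem_step a m q hq (p i) (p (i+1)) (p N)

lemma sum_abel (b c : ℕ → ℝ) (N : ℕ) :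
    ∑ i ∈ Finset.range N, (b (i+1) - b i) * c i
      = b N * c N - b 0 * c 0 - ∑ i ∈ Finset.range N, b (i+1) * (c (i+1) - c i) := by
  have h : ∀ i, (b (i+1) - b i) * c i
      = (b (i+1) * c (i+1) - b i * c i) - b (i+1) * (c (i+1) - c i) := fun i => by ring
  rw [Finset.sum_congr rfl fun i _ => h i, Finset.sum_sub_distrib,
    Finset.sum_range_sub (fun i => b i * c i)]

lemma chain_exists (K : Set (Fin n → ℝ)) (x y : Fin n → ℝ)
    (γ : ℝ → (Fin n → ℝ)) (hγ : ContinuousOn γ (Set.Icc 0 1))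
    (h0 : γ 0 = x) (h1 : γ 1 = y) (hmap : Set.MapsTo γ (Set.Icc 0 1) K)
    {L : ℝ} (hL : 0 ≤ L) (hvar : eVariationOn γ (Set.Icc 0 1) ≤ ENNReal.ofReal L)
    {h : ℝ} (hh : 0 < h) :
    ∃ N : ℕ, 1 ≤ N ∧ ∃ p : ℕ → (Fin n → ℝ),
      p 0 = x ∧ (∀ i, N ≤ i → p i = y) ∧ (∀ i, p i ∈ K) ∧
      (∀ i, ‖p (i+1) - p i‖ ≤ h) ∧
      (∀ M : ℕ, ∑ i ∈ Finset.range M, ‖p (i+1) - p i‖ ≤ L) ∧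
      (∀ i, ‖y - p i‖ ≤ L) := by
  have hunif : UniformContinuousOn γ (Set.Icc 0 1) :=
    (isCompact_Icc).uniformContinuousOn_of_continuous hγ
  rw [Metric.uniformContinuousOn_iff] at hunif
  obtain ⟨δ, hδ, hδ'⟩ := hunif h hh
  obtain ⟨N, hN⟩ := exists_nat_gt (1 / δ)
  have hNpos : 0 < N := by
    have h1δ : (0:ℝ) < 1/δ := by positivity
    have : (0:ℝ) < N := lt_trans h1δ hN
    exact_mod_cast this
  have hNR : (0:ℝ) < N := by exact_mod_cast hNpos
  have hstepδ : (1:ℝ)/N < δ := by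
    rw [div_lt_iff₀ hNR]
    rw [div_lt_iff₀ hδ] at hN
    linarith [mul_comm δ (N:ℝ)]
  set u : ℕ → ℝ := fun i => ((min i N : ℕ) : ℝ) / N with hu
  have humem : ∀ i, u i ∈ Set.Icc (0:ℝ) 1 := by
    intro i
    constructor
    · positivity
    · rw [div_le_one hNR]
      exact_mod_cast Nat.cast_le.2 (min_le_right i N)
  have humono : Monotone u := by
    intro i j hij
    have hle : ((min i N : ℕ) : ℝ) ≤ ((min j N : ℕ) : ℝ) := by
      exact_mod_cast (by omega : min i N ≤ min j N)
    exact (div_le_div_iff_of_pos_right hNR).2 hle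
  refine ⟨N, hNpos, fun i => γ (u i), ?_, ?_, ?_, ?_, ?_, ?_⟩
  · show γ (u 0) = x
    have : u 0 = 0 := by simp [hu]
    rw [this, h0]
  · intro i hi
    show γ (u i) = y
    have hmin : min i N = N := min_eq_right hi
    have : u i = 1 := by
      show ((min i N : ℕ) : ℝ) / N = 1
      rw [hmin]
      exact div_self (ne_of_gt hNR)
    rw [this, h1]
  · intro i; exact hmap (humem i)
  · intro i
    have hd : dist (u (i+1)) (u i) < δ := by
      rw [Real.dist_eq]
      have h1 : min i N ≤ min (i+1) N := by omega
      have h2 : min (i+1) N ≤ min i N + 1 := by omega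
      have : u (i+1) - u i ≤ 1 / N := by
        rw [hu]
        rw [div_sub_div_same, div_le_div_iff₀ hNR hNR]
        have hc : ((min (i+1) N : ℕ) : ℝ) ≤ ((min i N : ℕ) : ℝ) + 1 := by
          exact_mod_cast h2
        nlinarith
      have hnn : 0 ≤ u (i+1) - u i := sub_nonneg.2 (humono (Nat.le_succ i))
      rw [abs_of_nonneg hnn]
      linarith
    have := hδ' (u (i+1)) (humem _) (u i) (humem _) hd
    rw [dist_eq_norm] at this
    exact le_of_lt this
  · intro M
    have hsum := eVariationOn.sum_le (f := γ) (n := M) humono humem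
    have hsum2 : (∑ i ∈ Finset.range M, edist (γ (u (i+1))) (γ (u i)))
        ≤ ENNReal.ofReal L := le_trans hsum hvar
    have hrw : ∀ i, edist (γ (u (i+1))) (γ (u i))
        = ENNReal.ofReal ‖γ (u (i+1)) - γ (u i)‖ := by
      intro i; rw [edist_dist, dist_eq_norm]
    rw [Finset.sum_congr rfl fun i _ => hrw i, ← ENNReal.ofReal_sum_of_nonneg
      (fun i _ => norm_nonneg _)] at hsum2
    exact (ENNReal.ofReal_le_ofReal_iff hL).1 hsum2
  · intro i
    have hedist := eVariationOn.edist_le γ (by exact Set.mem_Icc.2 ⟨zero_le_one, le_refl 1⟩)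
      (humem i)
    have : edist (γ 1) (γ (u i)) ≤ ENNReal.ofReal L := le_trans hedist hvar
    rw [edist_dist, dist_eq_norm] at this
    rw [← h1]
    exact (ENNReal.ofReal_le_ofReal_iff hL).1 this

lemma main_aux (r : ℕ) (K : Set (Fin n → ℝ)) (c : ℝ) (hc : 1 ≤ c)
    (harc : ∀ x ∈ K, ∀ y ∈ K, ∃ γ : ℝ → (Fin n → ℝ),
      ContinuousOn γ (Set.Icc 0 1) ∧ γ 0 = x ∧ γ 1 = y ∧
      Set.MapsTo γ (Set.Icc 0 1) K ∧
      eVariationOn γ (Set.Icc 0 1) ≤ ENNReal.ofReal (c * ‖y - x‖)) :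
    ∀ d : ℕ, ∃ C : ℝ, 0 < C ∧ ∀ a : Jet n, WhitneyCondOn a r r K →
      ∀ M : ℝ, 0 ≤ M → (∀ k, deg k ≤ r → ∀ x ∈ K, |a k x| ≤ M) →
      ∀ q, deg q ≤ r → r - deg q ≤ d → ∀ x ∈ K, ∀ y ∈ K,
        |WRem a r q x y| ≤ C * M * ‖y - x‖ ^ (r - deg q) := by
  intro d
  induction d with
  | zero =>
    refine ⟨2, two_pos, fun a hW M hM hbound q hq hd x hx y hy => ?_⟩
    have hqr : deg q = r := by omega
    rw [WRem_top a hqr x y]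
    have : r - deg q = 0 := by omega
    rw [this, pow_zero, mul_one]
    calc |a q y - a q x| ≤ |a q y| + |a q x| := abs_sub _ _
      _ ≤ M + M := add_le_add (hbound q hq y hy) (hbound q hq x hx)
      _ = 2 * M := by ring
  | succ d IH =>
    obtain ⟨C', hC', IH⟩ := IH
    set N₀ : ℝ := ((MIdx n r).card : ℝ) with hN₀
    refine ⟨C' + (N₀ + 1) * (C' + r + 1) * c ^ r, by positivity, ?_⟩
    intro a hW M hM hbound q hq hd x hx y hy
    set C : ℝ := C' + (N₀ + 1) * (C' + r + 1) * c ^ r with hC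
    by_cases hdd : r - deg q ≤ d
    · calc |WRem a r q x y| ≤ C' * M * ‖y - x‖ ^ (r - deg q) :=
            IH a hW M hM hbound q hq hdd x hx y hy
        _ ≤ C * M * ‖y - x‖ ^ (r - deg q) := by
            apply mul_le_mul_of_nonneg_right ?_ (by positivity)
            apply mul_le_mul_of_nonneg_right ?_ hM
            have hN₀nn : (0:ℝ) ≤ N₀ := by rw [hN₀]; exact Nat.cast_nonneg _
            have hrnn : (0:ℝ) ≤ (r:ℝ) := Nat.cast_nonneg r
            have hcp : (0:ℝ) ≤ c ^ r := pow_nonneg (by linarith) r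
            have h0 : (0:ℝ) ≤ (N₀ + 1) * (C' + ↑r + 1) * c ^ r :=
              mul_nonneg (mul_nonneg (by linarith) (by linarith)) hcp
            rw [hC]; linarith
    -- main case : r - deg q = d + 1 ≥ 1
    have hP1 : 1 ≤ r - deg q := by omega
    rcases eq_or_ne x y with rfl | hxy
    · rw [WRem_self, abs_zero, sub_self, norm_zero,
        zero_pow (by omega : r - deg q ≠ 0), mul_zero]
    set P : ℕ := r - deg q with hP
    have hPr : P ≤ r := by omega
    set L : ℝ := c * ‖y - x‖ with hLdef
    have hyx : (0:ℝ) < ‖y - x‖ := by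
      rw [norm_pos_iff]; exact sub_ne_zero.2 (Ne.symm hxy)
    have hcpos : (0:ℝ) < c := lt_of_lt_of_le one_pos hc
    have hL0 : 0 < L := mul_pos hcpos hyx
    have hN₀nn : (0:ℝ) ≤ N₀ := Nat.cast_nonneg _
    have key : |WRem a r q x y| ≤ N₀ * ((C' + r + 1) * M * L ^ P) := by
      refine le_of_forall_pos_le_add ?_
      intro ε hε
      set ε₀ : ℝ := ε / L ^ P with hε₀def
      have hε₀ : 0 < ε₀ := div_pos hε (pow_pos hL0 P)
      obtain ⟨δ, hδ, Hδ⟩ := hW q hq ε₀ hε₀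
      obtain ⟨γ, hγ, hγ0, hγ1, hγK, hγvar⟩ := harc x hx y hy
      have hh : 0 < min δ L := lt_min hδ hL0
      obtain ⟨N, hN1, p, hp0, hpN, hpK, hpstep, hpsum, hpdist⟩ :=
        chain_exists K x y γ hγ hγ0 hγ1 hγK (le_of_lt hL0) hγvar hh
      have hstepL : ∀ i, ‖p (i+1) - p i‖ ≤ L := fun i =>
        (hpstep i).trans (min_le_right _ _)
      have hstepδ : ∀ i, ‖p (i+1) - p i‖ ≤ δ := fun i =>
        (hpstep i).trans (min_le_left _ _)
      have hcoord : ∀ i, ∀ t : Fin n, |(y - p i) t| ≤ L := fun i t =>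
        (norm_coord_le _ t).trans (hpdist i)
      have htel := WRem_telescope a r q hq p N
      rw [hp0, hpN N (le_refl N)] at htel
      rw [htel, Finset.sum_comm]
      set S : (Fin n → ℕ) → ℝ := fun j => ∑ i ∈ Finset.range N,
        WRem a r (q + j) (p i) (p (i + 1)) * (mpow (y - p (i + 1)) j / mfact j) with hS
      have hj0mem : (0 : Fin n → ℕ) ∈ MIdx n (r - deg q) :=
        mem_MIdx.2 (by rw [deg_eq_zero.2 rfl]; exact Nat.zero_le _)
      have hS0 : |S 0| ≤ ε := by
        have e0 : ∀ i, WRem a r (q + 0) (p i) (p (i+1))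
            * (mpow (y - p (i+1)) 0 / (mfact (0 : Fin n → ℕ) : ℝ)) = WRem a r q (p i) (p (i+1)) := by
          intro i; rw [add_zero, mpow_zero, mfact_zero]; ring
        rw [hS]
        simp only []
        rw [Finset.sum_congr rfl fun i _ => e0 i]
        calc |∑ i ∈ Finset.range N, WRem a r q (p i) (p (i+1))|
            ≤ ∑ i ∈ Finset.range N, |WRem a r q (p i) (p (i+1))| :=
              Finset.abs_sum_le_sum_abs _ _
          _ ≤ ∑ i ∈ Finset.range N, ε₀ * (L ^ (P - 1) * ‖p (i+1) - p i‖) := by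
              apply Finset.sum_le_sum
              intro i _
              have h1 := Hδ (p i) (hpK i) (p (i+1)) (hpK (i+1)) (hstepδ i)
              refine h1.trans ?_
              apply mul_le_mul_of_nonneg_left ?_ (le_of_lt hε₀)
              have : ‖p (i+1) - p i‖ ^ (r - deg q)
                  = ‖p (i+1) - p i‖ ^ (P - 1) * ‖p (i+1) - p i‖ := by
                rw [← pow_succ]; congr 1; omega
              rw [this]
              apply mul_le_mul_of_nonneg_right ?_ (norm_nonneg _)
              exact pow_le_pow_left₀ (norm_nonneg _) ((hstepL i)) _
          _ = ε₀ * L ^ (P - 1) * ∑ i ∈ Finset.range N, ‖p (i+1) - p i‖ := by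
              rw [Finset.mul_sum]; exact Finset.sum_congr rfl fun i _ => by ring
          _ ≤ ε₀ * L ^ (P - 1) * L := by
              apply mul_le_mul_of_nonneg_left (hpsum N) (by positivity)
          _ = ε₀ * L ^ P := by
              rw [mul_assoc, ← pow_succ]
              congr 2
              omega
          _ = ε := div_mul_cancel₀ ε (ne_of_gt (pow_pos hL0 P))
      have hSj : ∀ j ∈ (MIdx n (r - deg q)).erase 0,
          |S j| ≤ (C' + r + 1) * M * L ^ P := by
        intro j hj
        obtain ⟨hjne, hjmem⟩ := Finset.mem_erase.1 hj
        have hdegj : deg j ≤ P := mem_MIdx.1 hjmem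
        have hdegj1 : 1 ≤ deg j := by
          rcases Nat.eq_zero_or_pos (deg j) with h0 | h0
          · exact absurd (deg_eq_zero.1 h0) hjne
          · exact h0
        have hqj : deg (q + j) ≤ r := by rw [deg_add]; omega
        have hmfj : ∀ t : ℝ, |t / mfact j| ≤ |t| := by
          intro t
          rw [abs_div, abs_of_pos (lt_of_lt_of_le one_pos (one_le_mfact j))]
          exact div_le_self (abs_nonneg _) (one_le_mfact j)
        have hmp : ∀ i, |mpow (y - p (i+1)) j / mfact j| ≤ L ^ deg j := fun i =>
          (hmfj _).trans (abs_mpow_le _ _ (le_of_lt hL0) (hcoord (i+1)))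
        by_cases hdj : deg (q + j) = r
        -- top order : Abel summation
        · have hdegjP : deg j = P := by rw [deg_add] at hdj; omega
          set b : ℕ → ℝ := fun i => a (q + j) (p i) with hb
          set cc : ℕ → ℝ := fun i => mpow (y - p (i + 1)) j / mfact j with hcc
          have hrw : ∀ i, WRem a r (q + j) (p i) (p (i+1))
              * (mpow (y - p (i+1)) j / mfact j) = (b (i+1) - b i) * cc i := by
            intro i
            rw [WRem_top a hdj]
          have hccN : cc N = 0 := by
            rw [hcc]
            simp only []
            rw [hpN (N + 1) (by omega)]
            rw [sub_self, mpow_zero_left hjne, zero_div]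
          have habel : S j = b N * cc N - b 0 * cc 0
              - ∑ i ∈ Finset.range N, b (i+1) * (cc (i+1) - cc i) := by
            rw [hS]
            simp only []
            rw [Finset.sum_congr rfl fun i _ => hrw i]
            exact sum_abel b cc N
          rw [habel, hccN, mul_zero, zero_sub]
          have hbM : ∀ i, |b i| ≤ M := fun i => hbound (q + j) hqj (p i) (hpK i)
          have hcc0 : |cc 0| ≤ L ^ P := by
            rw [← hdegjP]
            exact hmp 0
          have hccdiff : ∀ i, |cc (i+1) - cc i|
              ≤ (deg j) * L ^ (P - 1) * ‖p (i+2) - p (i+1)‖ := by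
            intro i
            have hd1 : cc (i+1) - cc i
                = (mpow (y - p (i+2)) j - mpow (y - p (i+1)) j) / mfact j := by
              rw [hcc]; simp only []; rw [sub_div]
            rw [hd1]
            refine (hmfj _).trans ?_
            have hcb : ∀ t : Fin n, |(y - p (i+2)) t - (y - p (i+1)) t|
                ≤ ‖p (i+2) - p (i+1)‖ := by
              intro t
              have h := norm_coord_le (p (i+1) - p (i+2)) t
              rw [norm_sub_rev] at h
              have he : (y - p (i+2)) t - (y - p (i+1)) t = (p (i+1) - p (i+2)) t := by
                simp only [Pi.sub_apply]; ring
              rw [he]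
              exact h
            have hlip := prod_lip (y - p (i+2)) (y - p (i+1)) j
              (norm_nonneg (p (i+2) - p (i+1))) (hcoord (i+2)) (hcoord (i+1))
              hcb Finset.univ
            have hPm1 : deg j - 1 = P - 1 := by omega
            calc |mpow (y - p (i+2)) j - mpow (y - p (i+1)) j|
                ≤ (deg j) * L ^ (deg j - 1) * ‖p (i+2) - p (i+1)‖ := hlip
              _ = (deg j) * L ^ (P - 1) * ‖p (i+2) - p (i+1)‖ := by rw [hPm1]
          have hsumD : ∑ i ∈ Finset.range N, ‖p (i+2) - p (i+1)‖ ≤ L := by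
            have h1 := hpsum (N+1)
            have h2 := Finset.sum_range_succ' (fun i => ‖p (i+1) - p i‖) N
            have h3 : (0:ℝ) ≤ ‖p 1 - p 0‖ := norm_nonneg _
            rw [h2] at h1
            have : ∀ i, ‖p (i+1+1) - p (i+1)‖ = ‖p (i+2) - p (i+1)‖ := fun i => rfl
            calc ∑ i ∈ Finset.range N, ‖p (i+2) - p (i+1)‖
                = ∑ i ∈ Finset.range N, ‖p (i+1+1) - p (i+1)‖ := rfl
              _ ≤ L := by linarith
          calc |-(b 0 * cc 0) - ∑ i ∈ Finset.range N, b (i+1) * (cc (i+1) - cc i)|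
              ≤ |b 0 * cc 0| + |∑ i ∈ Finset.range N, b (i+1) * (cc (i+1) - cc i)| := by
                rw [show -(b 0 * cc 0) - ∑ i ∈ Finset.range N, b (i+1) * (cc (i+1) - cc i)
                  = -((b 0 * cc 0) + ∑ i ∈ Finset.range N, b (i+1) * (cc (i+1) - cc i))
                  by ring, abs_neg]
                exact abs_add_le _ _
            _ ≤ M * L ^ P + M * ((deg j) * L ^ (P-1) * L) := by
                apply add_le_add
                · rw [abs_mul]
                  exact mul_le_mul (hbM 0) hcc0 (abs_nonneg _) hM
                · calc |∑ i ∈ Finset.range N, b (i+1) * (cc (i+1) - cc i)|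
                      ≤ ∑ i ∈ Finset.range N, |b (i+1)| * |cc (i+1) - cc i| := by
                        refine (Finset.abs_sum_le_sum_abs _ _).trans ?_
                        exact Finset.sum_le_sum fun i _ => le_of_eq (abs_mul _ _)
                    _ ≤ ∑ i ∈ Finset.range N,
                        M * ((deg j) * L ^ (P-1) * ‖p (i+2) - p (i+1)‖) := by
                        apply Finset.sum_le_sum
                        intro i _
                        exact mul_le_mul (hbM (i+1)) (hccdiff i) (abs_nonneg _) hM
                    _ = M * ((deg j) * L ^ (P-1)) * ∑ i ∈ Finset.range N,
                        ‖p (i+2) - p (i+1)‖ := by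
                        rw [Finset.mul_sum]
                        exact Finset.sum_congr rfl fun i _ => by ring
                    _ ≤ M * ((deg j) * L ^ (P-1)) * L := by
                        apply mul_le_mul_of_nonneg_left hsumD
                        have : (0:ℝ) ≤ (deg j : ℝ) := Nat.cast_nonneg _
                        positivity
                    _ = M * ((deg j) * L ^ (P-1) * L) := by ring
            _ ≤ (C' + r + 1) * M * L ^ P := by
                have hLP : L ^ (P - 1) * L = L ^ P := by
                  rw [← pow_succ]; congr 1; omega
                have hdegjr : ((deg j : ℝ)) ≤ (r : ℝ) := by
                  exact_mod_cast le_trans hdegj hPr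
                have hLPnn : (0:ℝ) ≤ L ^ P := by positivity
                have e1 : M * ((deg j) * L ^ (P-1) * L) = (deg j : ℝ) * (M * L ^ P) := by
                  rw [← hLP]; ring
                rw [e1]
                have e2 : M * L ^ P + (deg j : ℝ) * (M * L ^ P)
                    = (1 + (deg j : ℝ)) * (M * L ^ P) := by ring
                rw [e2]
                have e3 : (C' + r + 1) * M * L ^ P = (C' + r + 1) * (M * L ^ P) := by ring
                rw [e3]
                apply mul_le_mul_of_nonneg_right ?_ (mul_nonneg hM hLPnn)
                linarith
        -- middle order : induction hypothesis
        · have hdj' : deg q + deg j ≠ r := fun hh => hdj (by rw [deg_add]; exact hh)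
          have hqj2 : deg q + deg j ≤ r := by rw [← deg_add]; exact hqj
          have hqjd : r - deg (q + j) ≤ d := by rw [deg_add]; omega
          set e : ℕ := r - deg (q + j) with he
          have he1 : 1 ≤ e := by rw [he, deg_add]; omega
          have hejP : deg j + e = P := by rw [he, deg_add]; omega
          calc |S j| ≤ ∑ i ∈ Finset.range N,
                |WRem a r (q + j) (p i) (p (i+1))| * |mpow (y - p (i+1)) j / mfact j| := by
                rw [hS]
                simp only []
                refine (Finset.abs_sum_le_sum_abs _ _).trans ?_
                exact Finset.sum_le_sum fun i _ => le_of_eq (abs_mul _ _)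
            _ ≤ ∑ i ∈ Finset.range N,
                (C' * M * ‖p (i+1) - p i‖ ^ e) * L ^ deg j := by
                apply Finset.sum_le_sum
                intro i _
                apply mul_le_mul
                · exact IH a hW M hM hbound (q + j) hqj hqjd (p i) (hpK i)
                    (p (i+1)) (hpK (i+1))
                · exact hmp i
                · exact abs_nonneg _
                · positivity
            _ ≤ ∑ i ∈ Finset.range N,
                (C' * M * (L ^ (e - 1) * ‖p (i+1) - p i‖)) * L ^ deg j := by
                apply Finset.sum_le_sum
                intro i _
                apply mul_le_mul_of_nonneg_right ?_ (by positivity)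
                apply mul_le_mul_of_nonneg_left ?_ (by positivity)
                have : ‖p (i+1) - p i‖ ^ e
                    = ‖p (i+1) - p i‖ ^ (e - 1) * ‖p (i+1) - p i‖ := by
                  rw [← pow_succ]; congr 1; omega
                rw [this]
                exact mul_le_mul_of_nonneg_right
                  (pow_le_pow_left₀ (norm_nonneg _) (hstepL i) _) (norm_nonneg _)
            _ = C' * M * L ^ (e - 1) * L ^ deg j * ∑ i ∈ Finset.range N, ‖p (i+1) - p i‖ := by
                rw [Finset.mul_sum]
                exact Finset.sum_congr rfl fun i _ => by ring
            _ ≤ C' * M * L ^ (e - 1) * L ^ deg j * L := by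
                apply mul_le_mul_of_nonneg_left (hpsum N) (by positivity)
            _ = C' * M * L ^ P := by
                rw [mul_assoc (C' * M * L ^ (e-1)), mul_assoc, ← pow_succ, ← pow_add]
                congr 2
                omega
            _ ≤ (C' + r + 1) * M * L ^ P := by
                apply mul_le_mul_of_nonneg_right ?_ (by positivity)
                apply mul_le_mul_of_nonneg_right ?_ hM
                have : (0:ℝ) ≤ r := Nat.cast_nonneg r
                linarith
      calc |∑ j ∈ MIdx n (r - deg q), S j|
          ≤ ∑ j ∈ MIdx n (r - deg q), |S j| := Finset.abs_sum_le_sum_abs _ _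
        _ = |S 0| + ∑ j ∈ (MIdx n (r - deg q)).erase 0, |S j| :=
            (Finset.add_sum_erase _ _ hj0mem).symm
        _ ≤ ε + N₀ * ((C' + r + 1) * M * L ^ P) := by
            apply add_le_add hS0
            calc ∑ j ∈ (MIdx n (r - deg q)).erase 0, |S j|
                ≤ ((MIdx n (r - deg q)).erase 0).card • ((C' + r + 1) * M * L ^ P) :=
                  Finset.sum_le_card_nsmul _ _ _ hSj
              _ = ((MIdx n (r - deg q)).erase 0).card * ((C' + r + 1) * M * L ^ P) := by
                  rw [nsmul_eq_mul]
              _ ≤ N₀ * ((C' + r + 1) * M * L ^ P) := by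
                  apply mul_le_mul_of_nonneg_right ?_ (by positivity)
                  rw [hN₀]
                  have h1 : ((MIdx n (r - deg q)).erase 0).card ≤ (MIdx n r).card := by
                    apply Finset.card_le_card
                    intro j hj
                    have := (Finset.mem_erase.1 hj).2
                    rw [mem_MIdx] at this ⊢
                    omega
                  exact_mod_cast h1
        _ = N₀ * ((C' + r + 1) * M * L ^ P) + ε := by ring
    calc |WRem a r q x y| ≤ N₀ * ((C' + r + 1) * M * L ^ P) := key
      _ = (N₀ * (C' + r + 1) * c ^ P) * M * ‖y - x‖ ^ P := by
          rw [hLdef, mul_pow]; ring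
      _ ≤ C * M * ‖y - x‖ ^ P := by
          apply mul_le_mul_of_nonneg_right ?_ (by positivity)
          apply mul_le_mul_of_nonneg_right ?_ hM
          have h1 : c ^ P ≤ c ^ r := pow_le_pow_right₀ hc hPr
          have h2 : (0:ℝ) < C' + r + 1 := by
            have : (0:ℝ) ≤ r := Nat.cast_nonneg r
            linarith
          have h3 : N₀ * (C' + r + 1) * c ^ P ≤ (N₀ + 1) * (C' + r + 1) * c ^ r := by
            apply mul_le_mul ?_ h1 (by positivity) (by positivity)
            nlinarith
          rw [hC]
          linarith


theorem statement6' {n : ℕ} (r : ℕ) (K : Set (Fin n → ℝ)) (hK : IsCompact K)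
    (hreg : WhitneyOneRegular K) :
    ∃ C : ℝ, 0 < C ∧ ∀ a : Jet n, RegularJetOn a r r K →
      ∀ M : ℝ, (∀ k, deg k ≤ r → ∀ x ∈ K, |a k x| ≤ M) →
      ∀ q, deg q ≤ r → ∀ x ∈ K, ∀ y ∈ K, x ≠ y →
        |WRem a r q x y| ≤ C * M * ‖y - x‖ ^ (r - deg q) := by
  obtain ⟨c, hc0, harc⟩ := hreg
  set c₀ : ℝ := max 1 c with hc₀def
  have hc₀ : 1 ≤ c₀ := le_max_left _ _
  have harc' : ∀ x ∈ K, ∀ y ∈ K, ∃ γ : ℝ → (Fin n → ℝ),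
      ContinuousOn γ (Set.Icc 0 1) ∧ γ 0 = x ∧ γ 1 = y ∧
      Set.MapsTo γ (Set.Icc 0 1) K ∧
      eVariationOn γ (Set.Icc 0 1) ≤ ENNReal.ofReal (c₀ * ‖y - x‖) := by
    intro x hx y hy
    obtain ⟨γ, h1, h2, h3, h4, h5⟩ := harc x hx y hy
    refine ⟨γ, h1, h2, h3, h4, le_trans h5 (ENNReal.ofReal_le_ofReal ?_)⟩
    exact mul_le_mul_of_nonneg_right (le_max_right _ _) (norm_nonneg _)
  obtain ⟨C, hC, H⟩ := main_aux r K c₀ hc₀ harc' r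
  refine ⟨C, hC, ?_⟩
  intro a hreg' M hbound q hq x hx y hy _
  have hwhit : WhitneyCondOn a r r K := hreg'.2 K (le_refl _) hK
  have hM : 0 ≤ M := by
    have h0 : deg (0 : Fin n → ℕ) ≤ r := by
      rw [deg_eq_zero.2 rfl]; exact Nat.zero_le _
    exact le_trans (abs_nonneg _) (hbound 0 h0 x hx)
  exact H a hwhit M hM hbound q hq (Nat.sub_le _ _) x hx y hy

/-- on a Whitney 1-regular compact set `K`, the Whitney seminorm
`‖A‖^r_K` and the sup seminorm `|A|^r_K` are equivalent on `E^r(K)`: the difference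
quotients are bounded by a constant (depending only on `K`) times the sup seminorm. -/
theorem statement6 {n : ℕ} (r : ℕ) (K : Set (Fin n → ℝ)) (hK : IsCompact K)
    (hreg : WhitneyOneRegular K) :
    ∃ C : ℝ, 0 < C ∧ ∀ a : Jet n, RegularJetOn a r r K →
      ∀ M : ℝ, (∀ k, deg k ≤ r → ∀ x ∈ K, |a k x| ≤ M) →
      ∀ q, deg q ≤ r → ∀ x ∈ K, ∀ y ∈ K, x ≠ y →
        |WRem a r q x y| ≤ C * M * ‖y - x‖ ^ (r - deg q) := by
  exact statement6' r K hK hreg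
end
end
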